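/- For all integers k, all a, b ≥ 0, all π_1 ∈ I_a(3412) and all π_2 ∈ I_b(3412), one has τ_k(π_1 * π_2) = C(0,k−1) + C(1,k−1) + τ_{k−2}(π_1) + 2·τ_{k−1}(π_1) + τ_k(π_1) + τ_k(π_2), where C(a,b) is the binomial coefficient (equal to 0 if b < 0 or b > a). -/

import Mathlib

/-- `π` (a sequence of length `n` with values in `Fin n`) contains the pattern `σ` of length `k`:
there is a strictly increasing choice of positions on which `π` has the same pairwise
comparisons as `σ`. -/
def Contains {n k : ℕ} (π : Fin n → Fin n) (σ : Fin k → Fin k) : Prop :=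
  ∃ f : Fin k → Fin n, StrictMono f ∧ ∀ a b : Fin k, σ a < σ b ↔ π (f a) < π (f b)

/-- `π` avoids the pattern `σ`. -/
def Avoids {n k : ℕ} (π : Fin n → Fin n) (σ : Fin k → Fin k) : Prop :=
  ¬ Contains π σ

/-- The pattern 3412, written 0-indexed. -/
def pat3412 : Fin 4 → Fin 4 := ![2, 3, 0, 1]

/-- The permutation `π₁ * π₂` of length `a + b + 2`: the sequence
`(a+2), π₁^{+1}, 1, π₂^{+(a+2)}` (written here 0-indexed). -/
def starFun {a b : ℕ} (f : Fin a → Fin a) (g : Fin b → Fin b) :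
    Fin (a + b + 2) → Fin (a + b + 2) := fun i =>
  if h0 : (i : ℕ) = 0 then ⟨a + 1, by omega⟩
  else if h1 : (i : ℕ) ≤ a then
    have hlt : (i : ℕ) - 1 < a := by omega
    ⟨(f ⟨(i : ℕ) - 1, hlt⟩ : ℕ) + 1, by have := (f ⟨(i : ℕ) - 1, hlt⟩).isLt; omega⟩
  else if h2 : (i : ℕ) = a + 1 then ⟨0, by omega⟩
  else
    have hlt : (i : ℕ) - (a + 2) < b := by have := i.isLt; omega
    ⟨(g ⟨(i : ℕ) - (a + 2), hlt⟩ : ℕ) + (a + 2),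
      by have := (g ⟨(i : ℕ) - (a + 2), hlt⟩).isLt; omega⟩

/-- `tau π k` is the number of decreasing subsequences of length `k` in `π`
(subsequences of type `k (k-1) ... 2 1`). -/
noncomputable def tau {n : ℕ} (π : Fin n → Fin n) (k : ℕ) : ℕ :=
  Nat.card {f : Fin k → Fin n // StrictMono f ∧ ∀ a b : Fin k, a < b → π (f b) < π (f a)}

/-- `tau` with an integer index, with the convention that `τ_k = 0` for `k ≤ 0`. -/
noncomputable def tauZ {n : ℕ} (π : Fin n → Fin n) (k : ℤ) : ℕ :=
  if k ≤ 0 then 0 else tau π k.toNat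

/-- Binomial coefficient `C(a, b)` with an integer lower index, equal to `0` when `b < 0`. -/
def chooseZ (a : ℕ) (b : ℤ) : ℕ := if b < 0 then 0 else a.choose b.toNat


namespace StarAux

def DecSet {n : ℕ} (π : Fin n → Fin n) (m : ℕ) :=
  {f : Fin m → Fin n // StrictMono f ∧ ∀ a b : Fin m, a < b → π (f b) < π (f a)}

lemma tau_def {n : ℕ} (π : Fin n → Fin n) (m : ℕ) : tau π m = Nat.card (DecSet π m) := rfl

instance {n m : ℕ} (π : Fin n → Fin n) : Finite (DecSet π m) := Subtype.finite

lemma card_split {α : Type} [Finite α] (q : α → Prop) :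
    Nat.card α = Nat.card {x // q x} + Nat.card {x // ¬ q x} := by
  classical
  rw [← Nat.card_sum]
  exact (Nat.card_congr (Equiv.sumCompl q)).symm

lemma tau_zero {n : ℕ} (π : Fin n → Fin n) : tau π 0 = 1 := by
  rw [tau_def]
  haveI : Unique (DecSet π 0) :=
    { default := ⟨Fin.elim0, ⟨fun x => x.elim0, fun x => x.elim0⟩⟩
      uniq := fun x => Subtype.ext (funext fun i => i.elim0) }
  exact Nat.card_unique

lemma tau_one {n : ℕ} (π : Fin n → Fin n) : tau π 1 = n := by
  rw [tau_def]
  have e : DecSet π 1 ≃ Fin n :=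
    { toFun := fun x => x.1 0
      invFun := fun v => ⟨fun _ => v,
        ⟨fun i j hij => by
          have := Subsingleton.elim i j; subst this; exact absurd hij (lt_irrefl _),
         fun i j hij => by
          have := Subsingleton.elim i j; subst this; exact absurd hij (lt_irrefl _)⟩⟩
      left_inv := fun x => Subtype.ext (funext fun i => by
        have : i = 0 := Subsingleton.elim i 0
        rw [this])
      right_inv := fun v => rfl }
  rw [Nat.card_congr e, Nat.card_eq_fintype_card, Fintype.card_fin]

def dsum {n p : ℕ} (π : Fin n → Fin n) (ρ : Fin p → Fin p) : Fin (n + p) → Fin (n + p) :=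
  fun i =>
    if h : (i : ℕ) < n then ⟨π ⟨i, h⟩, by have := (π ⟨i, h⟩).isLt; omega⟩
    else ⟨(ρ ⟨(i : ℕ) - n, by have := i.isLt; omega⟩ : ℕ) + n,
      by have := (ρ ⟨(i : ℕ) - n, by have := i.isLt; omega⟩).isLt; omega⟩

lemma dsum_val_left {n p : ℕ} (π : Fin n → Fin n) (ρ : Fin p → Fin p) (i : Fin (n + p))
    (h : (i : ℕ) < n) : (dsum π ρ i : ℕ) = π ⟨i, h⟩ := by
  simp [dsum, h]

lemma dsum_val_right {n p : ℕ} (π : Fin n → Fin n) (ρ : Fin p → Fin p) (i : Fin (n + p))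
    (h : n ≤ (i : ℕ)) :
    (dsum π ρ i : ℕ) = (ρ ⟨(i : ℕ) - n, by have := i.isLt; omega⟩ : ℕ) + n := by
  simp [dsum, Nat.not_lt.mpr h]

lemma dsum_lt_left {n p : ℕ} (π : Fin n → Fin n) (ρ : Fin p → Fin p) {i j : Fin (n + p)}
    (hi : (i : ℕ) < n) (hj : (j : ℕ) < n) :
    (dsum π ρ i < dsum π ρ j) ↔ π ⟨i, hi⟩ < π ⟨j, hj⟩ := by
  rw [Fin.lt_def, Fin.lt_def, dsum_val_left π ρ i hi, dsum_val_left π ρ j hj]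

lemma dsum_lt_right {n p : ℕ} (π : Fin n → Fin n) (ρ : Fin p → Fin p) {i j : Fin (n + p)}
    (hi : n ≤ (i : ℕ)) (hj : n ≤ (j : ℕ)) :
    (dsum π ρ i < dsum π ρ j) ↔
      ρ ⟨(i : ℕ) - n, by have := i.isLt; omega⟩ < ρ ⟨(j : ℕ) - n, by have := j.isLt; omega⟩ := by
  rw [Fin.lt_def, Fin.lt_def, dsum_val_right π ρ i hi, dsum_val_right π ρ j hj]
  omega

lemma tau_dsum {n p : ℕ} (π : Fin n → Fin n) (ρ : Fin p → Fin p) (m : ℕ) (hm : 1 ≤ m) :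
    tau (dsum π ρ) m = tau π m + tau ρ m := by
  classical
  set w := dsum π ρ with hw
  rw [tau_def, tau_def, tau_def,
    card_split (fun x : DecSet w m => ((x.1 ⟨0, hm⟩ : Fin (n + p)) : ℕ) < n)]
  have hall : ∀ x : DecSet w m, ((x.1 ⟨0, hm⟩ : ℕ) < n) → ∀ i, (x.1 i : ℕ) < n := by
    intro x h0 i
    by_contra hge
    push_neg at hge
    have hne : (⟨0, hm⟩ : Fin m) < i := by
      rcases Nat.eq_zero_or_pos (i : ℕ) with h | h
      · exfalso; have : i = ⟨0, hm⟩ := Fin.ext h; rw [this] at hge; omega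
      · exact Fin.mk_lt_of_lt_val (by omega) |>.trans_le (le_refl i) |>.trans_le (le_refl i)
    have hanti := x.2.2 ⟨0, hm⟩ i hne
    rw [Fin.lt_def, dsum_val_right π ρ _ hge, dsum_val_left π ρ _ h0] at hanti
    have := (π ⟨(x.1 ⟨0, hm⟩ : ℕ), h0⟩).isLt
    omega
  have hall2 : ∀ x : DecSet w m, ¬((x.1 ⟨0, hm⟩ : ℕ) < n) → ∀ i, n ≤ (x.1 i : ℕ) := by
    intro x h0 i
    have hle : x.1 ⟨0, hm⟩ ≤ x.1 i := x.2.1.monotone (by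
      rw [Fin.le_def]; exact Nat.zero_le _)
    rw [Fin.le_def] at hle
    omega
  congr 1
  · -- left piece ≃ DecSet π m
    refine Nat.card_congr ⟨fun x => ⟨fun i => ⟨(x.1.1 i : ℕ), hall x.1 x.2 i⟩, ?_, ?_⟩,
      fun y => ⟨⟨fun i => ⟨(y.1 i : ℕ), by have := (y.1 i).isLt; omega⟩, ?_, ?_⟩, ?_⟩, ?_, ?_⟩
    · intro i j hij
      exact x.1.2.1 hij
    · intro i j hij
      exact (dsum_lt_left π ρ (hall x.1 x.2 j) (hall x.1 x.2 i)).mp (x.1.2.2 i j hij)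
    · intro i j hij
      exact y.2.1 hij
    · intro i j hij
      exact (dsum_lt_left π ρ (y.1 j).isLt (y.1 i).isLt).mpr (y.2.2 i j hij)
    · exact (y.1 ⟨0, hm⟩).isLt
    · intro x; apply Subtype.ext; apply Subtype.ext; funext i; rfl
    · intro y; apply Subtype.ext; funext i; rfl
  · -- right piece ≃ DecSet ρ m
    refine Nat.card_congr ⟨fun x => ⟨fun i => ⟨(x.1.1 i : ℕ) - n,
        by have := (x.1.1 i).isLt; have := hall2 x.1 x.2 i; omega⟩, ?_, ?_⟩,
      fun y => ⟨⟨fun i => ⟨(y.1 i : ℕ) + n, by have := (y.1 i).isLt; omega⟩, ?_, ?_⟩, ?_⟩, ?_, ?_⟩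
    · intro i j hij
      have h := x.1.2.1 hij
      rw [Fin.lt_def] at h ⊢
      have hi := hall2 x.1 x.2 i
      simp only [Fin.val_mk] at *
      omega
    · intro i j hij
      have h := (dsum_lt_right π ρ (hall2 x.1 x.2 j) (hall2 x.1 x.2 i)).mp (x.1.2.2 i j hij)
      exact h
    · intro i j hij
      have h := y.2.1 hij
      rw [Fin.lt_def] at h ⊢
      simp only [Fin.val_mk] at *
      omega
    · intro i j hij
      have h := (dsum_lt_right π ρ (i := ⟨(y.1 j : ℕ) + n, by have := (y.1 j).isLt; omega⟩)
        (j := ⟨(y.1 i : ℕ) + n, by have := (y.1 i).isLt; omega⟩)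
        (by simp) (by simp)).mpr ?_
      · exact h
      · simp only [Fin.val_mk]
        have : ∀ z : Fin p, (⟨(z : ℕ) + n - n, by have := z.isLt; omega⟩ : Fin p) = z := by
          intro z; apply Fin.ext; simp
        rw [this, this]
        exact y.2.2 i j hij
    · simp
    · intro x
      apply Subtype.ext; apply Subtype.ext; funext i
      apply Fin.ext
      have := hall2 x.1 x.2 i
      simp only [Fin.val_mk]
      omega
    · intro y
      apply Subtype.ext; funext i
      apply Fin.ext
      simp

def pmax {n : ℕ} (π : Fin n → Fin n) : Fin (n + 1) → Fin (n + 1) := fun i =>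
  if h : (i : ℕ) = 0 then ⟨n, by omega⟩
  else
    have hlt : (i : ℕ) - 1 < n := by have := i.isLt; omega
    ⟨(π ⟨(i : ℕ) - 1, hlt⟩ : ℕ), by have := (π ⟨(i : ℕ) - 1, hlt⟩).isLt; omega⟩

lemma pmax_val_zero {n : ℕ} (π : Fin n → Fin n) (i : Fin (n + 1)) (h : (i : ℕ) = 0) :
    (pmax π i : ℕ) = n := by simp [pmax, h]

lemma pmax_val_pos {n : ℕ} (π : Fin n → Fin n) (i : Fin (n + 1)) (h : 1 ≤ (i : ℕ)) :
    (pmax π i : ℕ) = π ⟨(i : ℕ) - 1, by have := i.isLt; omega⟩ := by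
  simp [pmax, show ¬ (i : ℕ) = 0 by omega]

lemma pmax_lt {n : ℕ} (π : Fin n → Fin n) {i j : Fin (n + 1)}
    (hi : 1 ≤ (i : ℕ)) (hj : 1 ≤ (j : ℕ)) :
    (pmax π i < pmax π j) ↔
      π ⟨(i : ℕ) - 1, by have := i.isLt; omega⟩ < π ⟨(j : ℕ) - 1, by have := j.isLt; omega⟩ := by
  rw [Fin.lt_def, Fin.lt_def, pmax_val_pos π i hi, pmax_val_pos π j hj]

lemma pmax_lt_zero {n : ℕ} (π : Fin n → Fin n) {i j : Fin (n + 1)}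
    (hi : 1 ≤ (i : ℕ)) (hj : (j : ℕ) = 0) : pmax π i < pmax π j := by
  rw [Fin.lt_def, pmax_val_pos π i hi, pmax_val_zero π j hj]
  exact (π _).isLt

lemma tau_pmax {n : ℕ} (π : Fin n → Fin n) (m : ℕ) (hm : 1 ≤ m) :
    tau (pmax π) m = tau π m + tau π (m - 1) := by
  classical
  rw [tau_def, tau_def, tau_def,
    card_split (fun x : DecSet (pmax π) m => 1 ≤ ((x.1 ⟨0, hm⟩ : Fin (n + 1)) : ℕ))]
  have hpos : ∀ x : DecSet (pmax π) m, (1 ≤ (x.1 ⟨0, hm⟩ : ℕ)) → ∀ i, 1 ≤ (x.1 i : ℕ) := by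
    intro x h0 i
    have hle : x.1 ⟨0, hm⟩ ≤ x.1 i := x.2.1.monotone (by rw [Fin.le_def]; exact Nat.zero_le _)
    rw [Fin.le_def] at hle; omega
  have hpos2 : ∀ x : DecSet (pmax π) m, ¬(1 ≤ (x.1 ⟨0, hm⟩ : ℕ)) →
      ∀ i : Fin m, 0 < (i : ℕ) → 1 ≤ (x.1 i : ℕ) := by
    intro x h0 i hi
    have hlt : x.1 ⟨0, hm⟩ < x.1 i := x.2.1 (by simp only [Fin.lt_def, Fin.val_mk]; omega)
    rw [Fin.lt_def] at hlt; omega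
  congr 1
  · -- f 0 ≥ 1 : no occurrence of position 0, piece ≃ DecSet π m
    refine Nat.card_congr ⟨fun x => ⟨fun i =>
        ⟨(x.1.1 i : ℕ) - 1, by have := (x.1.1 i).isLt; have := hpos x.1 x.2 i; omega⟩, ?_, ?_⟩,
      fun y => ⟨⟨fun i => ⟨(y.1 i : ℕ) + 1, by have := (y.1 i).isLt; omega⟩, ?_, ?_⟩, ?_⟩,
      ?_, ?_⟩
    · intro i j hij
      have h := x.1.2.1 hij
      rw [Fin.lt_def] at h ⊢
      have := hpos x.1 x.2 i
      simp only [Fin.val_mk] at *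
      omega
    · intro i j hij
      exact (pmax_lt π (hpos x.1 x.2 j) (hpos x.1 x.2 i)).mp (x.1.2.2 i j hij)
    · intro i j hij
      have h := y.2.1 hij
      rw [Fin.lt_def] at h ⊢
      simp only [Fin.val_mk] at *
      omega
    · intro i j hij
      exact (pmax_lt π (i := ⟨(y.1 j : ℕ) + 1, by have := (y.1 j).isLt; omega⟩)
        (j := ⟨(y.1 i : ℕ) + 1, by have := (y.1 i).isLt; omega⟩)
        (by simp) (by simp)).mpr (y.2.2 i j hij)
    · simp
    · intro x
      apply Subtype.ext; apply Subtype.ext; funext i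
      apply Fin.ext
      have := hpos x.1 x.2 i
      simp only [Fin.val_mk]
      omega
    · intro y
      apply Subtype.ext; funext i
      apply Fin.ext
      simp
  · -- f 0 = 0 : position 0 used, piece ≃ DecSet π (m-1)
    refine Nat.card_congr ⟨fun x => ⟨fun i =>
        ⟨(x.1.1 ⟨(i : ℕ) + 1, by have := i.isLt; omega⟩ : ℕ) - 1,
          by have := (x.1.1 ⟨(i : ℕ) + 1, by have := i.isLt; omega⟩).isLt
             have := hpos2 x.1 x.2 ⟨(i : ℕ) + 1, by have := i.isLt; omega⟩ (by simp)
             omega⟩, ?_, ?_⟩,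
      fun y => ⟨⟨fun i =>
        if h : (i : ℕ) = 0 then ⟨0, by omega⟩
        else ⟨(y.1 ⟨(i : ℕ) - 1, by have := i.isLt; omega⟩ : ℕ) + 1,
          by have := (y.1 ⟨(i : ℕ) - 1, by have := i.isLt; omega⟩).isLt; omega⟩, ?_, ?_⟩, ?_⟩,
      ?_, ?_⟩
    · intro i j hij
      have h := x.1.2.1 (show (⟨(i : ℕ) + 1, by have := i.isLt; omega⟩ : Fin m) <
          ⟨(j : ℕ) + 1, by have := j.isLt; omega⟩ by rw [Fin.lt_def]; simp; exact hij)
      rw [Fin.lt_def] at h ⊢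
      have := hpos2 x.1 x.2 ⟨(i : ℕ) + 1, by have := i.isLt; omega⟩ (by simp)
      simp only [Fin.val_mk] at *
      omega
    · intro i j hij
      exact (pmax_lt π
        (hpos2 x.1 x.2 ⟨(j : ℕ) + 1, by have := j.isLt; omega⟩ (by simp))
        (hpos2 x.1 x.2 ⟨(i : ℕ) + 1, by have := i.isLt; omega⟩ (by simp))).mp
        (x.1.2.2 _ _ (by rw [Fin.lt_def]; simp; exact hij))
    · intro i j hij
      rw [Fin.lt_def] at hij
      by_cases hi : (i : ℕ) = 0
      · simp only [dif_pos hi, dif_neg (show ¬ (j : ℕ) = 0 by omega)]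
        rw [Fin.lt_def]
        simp
      · simp only [dif_neg hi, dif_neg (show ¬ (j : ℕ) = 0 by omega)]
        rw [Fin.lt_def]
        have h := y.2.1 (show (⟨(i : ℕ) - 1, by have := i.isLt; omega⟩ : Fin (m - 1)) <
          ⟨(j : ℕ) - 1, by have := j.isLt; omega⟩ by rw [Fin.lt_def]; simp; omega)
        rw [Fin.lt_def] at h
        simp only [Fin.val_mk] at *
        omega
    · intro i j hij
      rw [Fin.lt_def] at hij
      by_cases hi : (i : ℕ) = 0
      · simp only [dif_pos hi, dif_neg (show ¬ (j : ℕ) = 0 by omega)]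
        exact pmax_lt_zero π (by simp) (by simp)
      · simp only [dif_neg hi, dif_neg (show ¬ (j : ℕ) = 0 by omega)]
        refine (pmax_lt π (by simp) (by simp)).mpr ?_
        exact y.2.2 _ _ (by rw [Fin.lt_def]; simp; omega)
    · simp
    · intro x
      apply Subtype.ext; apply Subtype.ext; funext i
      apply Fin.ext
      by_cases hi : (i : ℕ) = 0
      · simp only [dif_pos hi]
        have h0 : (⟨0, hm⟩ : Fin m) = i := Fin.ext hi.symm
        have h2 := x.2
        rw [← h0]
        omega
      · simp only [dif_neg hi, Fin.val_mk]
        have hidx : (⟨(i : ℕ) - 1 + 1, by have := i.isLt; omega⟩ : Fin m) = i :=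
          Fin.ext (by simp; omega)
        rw [hidx]
        have := hpos2 x.1 x.2 i (by omega)
        omega
    · intro y
      apply Subtype.ext; funext i
      apply Fin.ext
      simp only [dif_neg (show ¬ ((i : ℕ) + 1) = 0 by omega), Fin.val_mk]
      have hidx : (⟨(i : ℕ) + 1 - 1, by have := i.isLt; omega⟩ : Fin (m - 1)) = i :=
        Fin.ext (by simp)
      rw [hidx]
      omega

def amin {n : ℕ} (π : Fin n → Fin n) : Fin (n + 1) → Fin (n + 1) := fun i =>
  if h : (i : ℕ) < n then ⟨(π ⟨i, h⟩ : ℕ) + 1, by have := (π ⟨i, h⟩).isLt; omega⟩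
  else ⟨0, by omega⟩

lemma amin_val_lt {n : ℕ} (π : Fin n → Fin n) (i : Fin (n + 1)) (h : (i : ℕ) < n) :
    (amin π i : ℕ) = (π ⟨i, h⟩ : ℕ) + 1 := by simp [amin, h]

lemma amin_val_last {n : ℕ} (π : Fin n → Fin n) (i : Fin (n + 1)) (h : ¬ (i : ℕ) < n) :
    (amin π i : ℕ) = 0 := by simp [amin, h]

lemma amin_lt {n : ℕ} (π : Fin n → Fin n) {i j : Fin (n + 1)}
    (hi : (i : ℕ) < n) (hj : (j : ℕ) < n) :
    (amin π i < amin π j) ↔ π ⟨i, hi⟩ < π ⟨j, hj⟩ := by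
  rw [Fin.lt_def, Fin.lt_def, amin_val_lt π i hi, amin_val_lt π j hj]
  omega

lemma amin_lt_last {n : ℕ} (π : Fin n → Fin n) {i j : Fin (n + 1)}
    (hi : (i : ℕ) < n) (hj : ¬ (j : ℕ) < n) : amin π j < amin π i := by
  rw [Fin.lt_def, amin_val_lt π i hi, amin_val_last π j hj]
  omega

lemma tau_amin {n : ℕ} (π : Fin n → Fin n) (m : ℕ) (hm : 1 ≤ m) :
    tau (amin π) m = tau π m + tau π (m - 1) := by
  classical
  rw [tau_def, tau_def, tau_def,
    card_split (fun x : DecSet (amin π) m =>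
      ((x.1 ⟨m - 1, by omega⟩ : Fin (n + 1)) : ℕ) < n)]
  have hlt : ∀ x : DecSet (amin π) m, ((x.1 ⟨m - 1, by omega⟩ : ℕ) < n) →
      ∀ i, (x.1 i : ℕ) < n := by
    intro x h0 i
    have hle : x.1 i ≤ x.1 ⟨m - 1, by omega⟩ := x.2.1.monotone (by
      rw [Fin.le_def]; simp only [Fin.val_mk]; have := i.isLt; omega)
    rw [Fin.le_def] at hle; omega
  have hlt2 : ∀ x : DecSet (amin π) m, ¬((x.1 ⟨m - 1, by omega⟩ : ℕ) < n) →
      ∀ i : Fin m, (i : ℕ) < m - 1 → (x.1 i : ℕ) < n := by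
    intro x h0 i hi
    have h := x.2.1 (show i < ⟨m - 1, by omega⟩ by
      rw [Fin.lt_def]; simp only [Fin.val_mk]; omega)
    rw [Fin.lt_def] at h
    have := (x.1 ⟨m - 1, by omega⟩).isLt
    omega
  congr 1
  · -- all values < n : piece ≃ DecSet π m
    refine Nat.card_congr ⟨fun x => ⟨fun i => ⟨(x.1.1 i : ℕ), hlt x.1 x.2 i⟩, ?_, ?_⟩,
      fun y => ⟨⟨fun i => ⟨(y.1 i : ℕ), by have := (y.1 i).isLt; omega⟩, ?_, ?_⟩, ?_⟩, ?_, ?_⟩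
    · intro i j hij
      exact x.1.2.1 hij
    · intro i j hij
      exact (amin_lt π (hlt x.1 x.2 j) (hlt x.1 x.2 i)).mp (x.1.2.2 i j hij)
    · intro i j hij
      exact y.2.1 hij
    · intro i j hij
      exact (amin_lt π (i := ⟨(y.1 j : ℕ), by have := (y.1 j).isLt; omega⟩)
        (j := ⟨(y.1 i : ℕ), by have := (y.1 i).isLt; omega⟩)
        (y.1 j).isLt (y.1 i).isLt).mpr (y.2.2 i j hij)
    · exact (y.1 ⟨m - 1, by omega⟩).isLt
    · intro x
      apply Subtype.ext; apply Subtype.ext; funext i; rfl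
    · intro y
      apply Subtype.ext; funext i; rfl
  · -- last position used : piece ≃ DecSet π (m - 1)
    refine Nat.card_congr ⟨fun x => ⟨fun i =>
        ⟨(x.1.1 ⟨(i : ℕ), by have := i.isLt; omega⟩ : ℕ),
          hlt2 x.1 x.2 ⟨(i : ℕ), by have := i.isLt; omega⟩ (by simp [i.isLt])⟩, ?_, ?_⟩,
      fun y => ⟨⟨fun i =>
        if h : (i : ℕ) < m - 1 then
          ⟨(y.1 ⟨(i : ℕ), h⟩ : ℕ), by have := (y.1 ⟨(i : ℕ), h⟩).isLt; omega⟩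
        else ⟨n, by omega⟩, ?_, ?_⟩, ?_⟩,
      ?_, ?_⟩
    · intro i j hij
      have h := x.1.2.1 (show (⟨(i : ℕ), by have := i.isLt; omega⟩ : Fin m) <
        ⟨(j : ℕ), by have := j.isLt; omega⟩ by rw [Fin.lt_def]; exact hij)
      exact h
    · intro i j hij
      exact (amin_lt π (hlt2 x.1 x.2 _ (by simp [j.isLt])) (hlt2 x.1 x.2 _ (by simp [i.isLt]))).mp
        (x.1.2.2 _ _ (by rw [Fin.lt_def]; exact hij))
    · intro i j hij
      rw [Fin.lt_def] at hij
      have hi : (i : ℕ) < m - 1 := by have := j.isLt; omega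
      by_cases hj : (j : ℕ) < m - 1
      · simp only [dif_pos hi, dif_pos hj]
        have h := y.2.1 (show (⟨(i : ℕ), hi⟩ : Fin (m - 1)) < ⟨(j : ℕ), hj⟩ by
          rw [Fin.lt_def]; exact hij)
        rw [Fin.lt_def] at h ⊢
        exact h
      · simp only [dif_pos hi, dif_neg hj]
        rw [Fin.lt_def]
        exact (y.1 ⟨(i : ℕ), hi⟩).isLt
    · intro i j hij
      rw [Fin.lt_def] at hij
      have hi : (i : ℕ) < m - 1 := by have := j.isLt; omega
      by_cases hj : (j : ℕ) < m - 1
      · simp only [dif_pos hi, dif_pos hj]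
        exact (amin_lt π (y.1 ⟨(j : ℕ), hj⟩).isLt (y.1 ⟨(i : ℕ), hi⟩).isLt).mpr
          (y.2.2 _ _ (by rw [Fin.lt_def]; exact hij))
      · simp only [dif_pos hi, dif_neg hj]
        exact amin_lt_last π (y.1 ⟨(i : ℕ), hi⟩).isLt (by simp)
    · simp
    · intro x
      apply Subtype.ext; apply Subtype.ext; funext i
      apply Fin.ext
      by_cases hi : (i : ℕ) < m - 1
      · simp only [dif_pos hi, Fin.val_mk]
      · simp only [dif_neg hi, Fin.val_mk]
        have h2 := x.2
        have h0 : i = ⟨m - 1, by omega⟩ := Fin.ext (by simp; have := i.isLt; omega)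
        rw [h0]
        have := (x.1.1 ⟨m - 1, by omega⟩).isLt
        omega
    · intro y
      apply Subtype.ext; funext i
      apply Fin.ext
      simp only [dif_pos i.isLt, Fin.val_mk]

lemma tau_reindex {n n' : ℕ} (h : n = n') (π : Fin n → Fin n) (m : ℕ) :
    tau (fun i : Fin n' => Fin.cast h (π (Fin.cast h.symm i))) m = tau π m := by
  subst h; rfl

lemma star_eq {a b : ℕ} (π₁ : Fin a → Fin a) (π₂ : Fin b → Fin b) :
    starFun π₁ π₂ = fun i : Fin (a + b + 2) =>
      Fin.cast (show a + 1 + 1 + b = a + b + 2 by omega)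
        (dsum (amin (pmax π₁)) π₂
          (Fin.cast (show a + 1 + 1 + b = a + b + 2 by omega).symm i)) := by
  funext i
  apply Fin.ext
  unfold starFun dsum amin pmax
  simp only [Fin.coe_cast]
  split_ifs <;> simp -failIfUnchanged only [Fin.val_mk, Fin.coe_cast] <;> omega

lemma key {a b : ℕ} (π₁ : Fin a → Fin a) (π₂ : Fin b → Fin b) (m : ℕ) (hm : 2 ≤ m) :
    tau (starFun π₁ π₂) m =
      ((tau π₁ m + tau π₁ (m - 1)) + (tau π₁ (m - 1) + tau π₁ (m - 2))) + tau π₂ m := by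
  have h : m - 1 - 1 = m - 2 := by omega
  rw [star_eq π₁ π₂, tau_reindex, tau_dsum _ _ m (by omega), tau_amin _ m (by omega),
    tau_pmax _ m (by omega), tau_pmax _ (m - 1) (by omega), h]

lemma tauZ_nonpos {n : ℕ} (π : Fin n → Fin n) {k : ℤ} (h : k ≤ 0) : tauZ π k = 0 := by
  unfold tauZ; rw [if_pos h]

lemma tauZ_pos {n : ℕ} (π : Fin n → Fin n) {k : ℤ} (h : 0 < k) :
    tauZ π k = tau π k.toNat := by
  unfold tauZ; rw [if_neg (by omega)]

lemma chooseZ_neg {a : ℕ} {k : ℤ} (h : k < 0) : chooseZ a k = 0 := by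
  unfold chooseZ; rw [if_pos h]

lemma chooseZ_nonneg {a : ℕ} {k : ℤ} (h : 0 ≤ k) : chooseZ a k = a.choose k.toNat := by
  unfold chooseZ; rw [if_neg (by omega)]

end StarAux

/-- for all integers `k` and `π₁ ∈ I_a(3412)`, `π₂ ∈ I_b(3412)`,
`τ_k(π₁ * π₂) = C(0,k-1) + C(1,k-1) + τ_{k-2}(π₁) + 2·τ_{k-1}(π₁) + τ_k(π₁) + τ_k(π₂)`. -/
theorem stmt1 (k : ℤ) (a b : ℕ) (π₁ : Fin a → Fin a) (π₂ : Fin b → Fin b)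
    (h₁inv : Function.Involutive π₁) (h₁av : Avoids π₁ pat3412)
    (h₂inv : Function.Involutive π₂) (h₂av : Avoids π₂ pat3412) :
    tauZ (starFun π₁ π₂) k =
      chooseZ 0 (k - 1) + chooseZ 1 (k - 1) + tauZ π₁ (k - 2) +
        2 * tauZ π₁ (k - 1) + tauZ π₁ k + tauZ π₂ k := by
  classical
  rcases le_or_gt k 0 with hk0 | hk0
  · rw [StarAux.tauZ_nonpos _ hk0, StarAux.tauZ_nonpos _ (show k - 2 ≤ 0 by omega),
      StarAux.tauZ_nonpos _ (show k - 1 ≤ 0 by omega), StarAux.tauZ_nonpos _ hk0,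
      StarAux.tauZ_nonpos _ hk0, StarAux.chooseZ_neg (show k - 1 < 0 by omega),
      StarAux.chooseZ_neg (show k - 1 < 0 by omega)]
  · rcases eq_or_lt_of_le (show (1 : ℤ) ≤ k by omega) with hk1 | hk1
    · subst hk1
      rw [StarAux.tauZ_nonpos π₁ (show (1 : ℤ) - 2 ≤ 0 by omega),
        StarAux.tauZ_nonpos π₁ (show (1 : ℤ) - 1 ≤ 0 by omega),
        StarAux.tauZ_pos _ (by omega), StarAux.tauZ_pos π₁ (by omega),
        StarAux.tauZ_pos π₂ (by omega),
        StarAux.chooseZ_nonneg (show (0 : ℤ) ≤ 1 - 1 by omega),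
        StarAux.chooseZ_nonneg (show (0 : ℤ) ≤ 1 - 1 by omega)]
      norm_num [StarAux.tau_one]
      omega
    · rcases eq_or_lt_of_le (show (2 : ℤ) ≤ k by omega) with hk2 | hk2
      · subst hk2
        rw [StarAux.tauZ_nonpos π₁ (show (2 : ℤ) - 2 ≤ 0 by omega),
          StarAux.tauZ_pos _ (by omega), StarAux.tauZ_pos π₁ (show (0 : ℤ) < 2 - 1 by omega),
          StarAux.tauZ_pos π₁ (by omega), StarAux.tauZ_pos π₂ (by omega),
          StarAux.chooseZ_nonneg (show (0 : ℤ) ≤ 2 - 1 by omega),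
          StarAux.chooseZ_nonneg (show (0 : ℤ) ≤ 2 - 1 by omega)]
        norm_num
        rw [show Int.toNat 2 = 2 by rfl, StarAux.key π₁ π₂ 2 (by omega), StarAux.tau_zero,
          show (2 : ℕ) - 1 = 1 by rfl]
        omega
      · have hm3 : 3 ≤ k.toNat := by omega
        rw [StarAux.tauZ_pos π₁ (show (0 : ℤ) < k - 2 by omega),
          StarAux.tauZ_pos π₁ (show (0 : ℤ) < k - 1 by omega),
          StarAux.tauZ_pos _ (by omega), StarAux.tauZ_pos π₁ (by omega),
          StarAux.tauZ_pos π₂ (by omega),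
          StarAux.chooseZ_nonneg (show (0 : ℤ) ≤ k - 1 by omega),
          StarAux.chooseZ_nonneg (show (0 : ℤ) ≤ k - 1 by omega)]
        have h1 : (k - 1).toNat = k.toNat - 1 := by omega
        have h2 : (k - 2).toNat = k.toNat - 2 := by omega
        rw [h1, h2, Nat.choose_eq_zero_of_lt (show 0 < k.toNat - 1 by omega),
          Nat.choose_eq_zero_of_lt (show 1 < k.toNat - 1 by omega),
          StarAux.key π₁ π₂ k.toNat (by omega)]
        omega
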